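/- Variable occurrence invariant is preserved by resolution: say a clause H ⇒ C is 'grounded-by-hypotheses' if every variable occurring in C also occurs in some non-m-event fact of H. If R = (H ⇒ C) and R' = (H' ∧ F0 ⇒ C') are grounded-by-hypotheses clauses, C and F0 unify with most general unifier σu, and F0 is not an m-event fact, then the resolvent R'' = (σu H ∧ σu H' ⇒ σu C') is grounded-by-hypotheses. -/

import Mathlib

/-- First-order terms over function symbols `F`, with natural-number variables. -/
inductive Trm (F : Type) : Type
  | var : Nat → Trm F
  | app : F → List (Trm F) → Trm F

namespace Trm

variable {F : Type}

/-- Homomorphic extension of a substitution to terms. -/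
def subst (σ : Nat → Trm F) : Trm F → Trm F
  | var x => σ x
  | app f ts => app f (ts.attach.map (fun t => subst σ t.1))
decreasing_by
  simp_wf
  have := List.sizeOf_lt_of_mem t.2
  omega

/-- `VarOcc x t` : variable `x` occurs in term `t`. -/
inductive VarOcc (x : Nat) : Trm F → Prop
  | var : VarOcc x (var x)
  | app {f : F} {ts : List (Trm F)} {t : Trm F} : t ∈ ts → VarOcc x t → VarOcc x (app f ts)

end Trm

/-- A term is closed when no variable occurs in it. -/
def ClosedT {F : Type} (t : Trm F) : Prop := ∀ x, ¬ Trm.VarOcc x t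

/-- A fact is an atom `P(t1,...,tn)`. -/
structure Fct (P F : Type) where
  pred : P
  args : List (Trm F)

def Fct.subst {P F : Type} (σ : Nat → Trm F) (a : Fct P F) : Fct P F :=
  ⟨a.pred, a.args.map (Trm.subst σ)⟩

def Fct.Closed {P F : Type} (a : Fct P F) : Prop := ∀ t ∈ a.args, ClosedT t

def Fct.VarOcc {P F : Type} (x : Nat) (a : Fct P F) : Prop := ∃ t ∈ a.args, Trm.VarOcc x t

/-- A Horn clause: a finite multiset of hypotheses and a conclusion. -/
structure Clause (P F : Type) where
  hyp : Multiset (Fct P F)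
  concl : Fct P F

/-- `(H1 ⇒ C1)` subsumes `(H2 ⇒ C2)` iff some substitution σ has `σ C1 = C2` and `σ H1 ⊆ H2`. -/
def Subsumes {P F : Type} (c1 c2 : Clause P F) : Prop :=
  ∃ σ : Nat → Trm F, Fct.subst σ c1.concl = c2.concl ∧ c1.hyp.map (Fct.subst σ) ≤ c2.hyp

/-- A clause is grounded-by-hypotheses when every variable of its conclusion occurs in some
non-m-event fact of its hypotheses. -/
def Grounded {P F : Type} (mevent : P) (c : Clause P F) : Prop :=
  ∀ x : Nat, Fct.VarOcc x c.concl → ∃ f ∈ c.hyp, f.pred ≠ mevent ∧ Fct.VarOcc x f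

lemma subst_app {F : Type} (σ : Nat → Trm F) (f : F) (ts : List (Trm F)) :
    Trm.subst σ (Trm.app f ts) = Trm.app f (ts.map (Trm.subst σ)) := by
  rw [Trm.subst]
  congr 1
  simp [List.attach_map_val]

lemma varOcc_subst_bwd {F : Type} {σ : Nat → Trm F} {x y : Nat} {t : Trm F}
    (h : Trm.VarOcc y t) (hx : Trm.VarOcc x (σ y)) : Trm.VarOcc x (Trm.subst σ t) := by
  induction h with
  | var => simpa [Trm.subst] using hx
  | app hmem _ ih =>
    rw [subst_app]
    exact Trm.VarOcc.app (List.mem_map_of_mem hmem) ih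

lemma varOcc_subst_fwd {F : Type} {σ : Nat → Trm F} {x : Nat} :
    ∀ t : Trm F, Trm.VarOcc x (Trm.subst σ t) → ∃ y, Trm.VarOcc y t ∧ Trm.VarOcc x (σ y) := by
  have key : ∀ n (t : Trm F), sizeOf t ≤ n → Trm.VarOcc x (Trm.subst σ t) →
      ∃ y, Trm.VarOcc y t ∧ Trm.VarOcc x (σ y) := by
    intro n
    induction n with
    | zero => intro t ht; cases t <;> simp at ht
    | succ n ih =>
      intro t ht h
      cases t with
      | var z =>
        refine ⟨z, Trm.VarOcc.var, ?_⟩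
        simpa [Trm.subst] using h
      | app f ts =>
        rw [subst_app] at h
        cases h with
        | app hmem hocc =>
          rcases List.mem_map.mp hmem with ⟨s, hs, rfl⟩
          have hsz : sizeOf s ≤ n := by
            have := List.sizeOf_lt_of_mem hs
            simp at ht; omega
          rcases ih s hsz hocc with ⟨y, hy1, hy2⟩
          exact ⟨y, Trm.VarOcc.app hs hy1, hy2⟩
  exact fun t => key (sizeOf t) t le_rfl

lemma fct_varOcc_subst {P F : Type} {σ : Nat → Trm F} {x : Nat} {a : Fct P F} :
    Fct.VarOcc x (Fct.subst σ a) ↔ ∃ y, Fct.VarOcc y a ∧ Trm.VarOcc x (σ y) := by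
  constructor
  · rintro ⟨t, ht, hocc⟩
    rcases List.mem_map.mp ht with ⟨s, hs, rfl⟩
    rcases varOcc_subst_fwd s hocc with ⟨y, hy1, hy2⟩
    exact ⟨y, ⟨s, hs, hy1⟩, hy2⟩
  · rintro ⟨y, ⟨s, hs, hy1⟩, hy2⟩
    exact ⟨Trm.subst σ s, List.mem_map_of_mem hs, varOcc_subst_bwd hy1 hy2⟩

/-- The grounded-by-hypotheses invariant is preserved by resolution: if `R = (H ⇒ C)` and
`R' = (H' ∧ F0 ⇒ C')` are grounded-by-hypotheses, `C` and `F0` unify with most general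
unifier `σu`, and `F0` is not an m-event fact, then the resolvent
`(σu H ∧ σu H' ⇒ σu C')` is grounded-by-hypotheses. -/
theorem grounded_preserved_by_resolution {P F : Type} (mevent : P)
    (H H' : Multiset (Fct P F)) (C C' F0 : Fct P F) (σu : Nat → Trm F)
    (h1 : Grounded mevent ⟨H, C⟩)
    (h2 : Grounded mevent ⟨F0 ::ₘ H', C'⟩)
    (hF0 : F0.pred ≠ mevent)
    (hu : Fct.subst σu C = Fct.subst σu F0)
    (hmgu : ∀ δ : Nat → Trm F, Fct.subst δ C = Fct.subst δ F0 →
      ∃ δ' : Nat → Trm F, ∀ x, δ x = Trm.subst δ' (σu x)) :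
    Grounded mevent ⟨(H + H').map (Fct.subst σu), Fct.subst σu C'⟩ := by
  intro x hx
  rcases fct_varOcc_subst.mp hx with ⟨y, hyC', hy⟩
  rcases h2 y hyC' with ⟨f, hf, hfp, hfocc⟩
  rcases Multiset.mem_cons.mp hf with rfl | hf'
  · -- f = F0 : x occurs in σu F0 = σu C
    have hxC : Fct.VarOcc x (Fct.subst σu C) := by
      rw [hu]
      exact fct_varOcc_subst.mpr ⟨y, hfocc, hy⟩
    rcases fct_varOcc_subst.mp hxC with ⟨z, hzC, hz⟩
    rcases h1 z hzC with ⟨g, hg, hgp, hgocc⟩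
    refine ⟨Fct.subst σu g, ?_, hgp, fct_varOcc_subst.mpr ⟨z, hgocc, hz⟩⟩
    exact Multiset.mem_map_of_mem _ (Multiset.mem_add.mpr (Or.inl hg))
  · refine ⟨Fct.subst σu f, ?_, hfp, fct_varOcc_subst.mpr ⟨y, hfocc, hy⟩⟩
    exact Multiset.mem_map_of_mem _ (Multiset.mem_add.mpr (Or.inr hf'))
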